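/- Suppose {λ_k}_{k≥1} is a nonincreasing sequence of nonnegative reals satisfying a k^{-2ς} ≤ λ_k ≤ b k^{-2ς} for constants a ≥ 0, b > 0 and ς > 1/4. Then for all 0 < λ < 1, the effective dimension N(λ) = Σ_{k≥1} λ_k²/(λ_k² + λ) satisfies (a^{1/(2ς)}/2) λ^{-1/(4ς)} − 1/2 ≤ N(λ) ≤ b^{1/(2ς)}(1 + 1/(4ς−1)) λ^{-1/(4ς)} + 1. -/

import Mathlib

open Real Finset

lemma bern_aux {s t : ℝ} (hs : 0 < s) (ht0 : 0 < t) (ht : t ≤ 1/2) :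
    1 + s * t ≤ (1 - t) ^ (-s) := by
  have h1t : 0 < 1 - t := by linarith
  rcases le_or_gt s 1 with hs1 | hs1
  · have hb : (1 - t) ^ s ≤ 1 - s * t := by
      have h := rpow_one_add_le_one_add_mul_self (s := -t) (by linarith) hs.le hs1
      have he : (1 + -t : ℝ) = 1 - t := by ring
      rw [he] at h
      linarith
    have hst : s * t ≤ 1/2 := by nlinarith
    have hpos : 0 < (1 - t) ^ s := rpow_pos_of_pos h1t s
    rw [Real.rpow_neg h1t.le, ← one_div, le_div_iff₀ hpos]
    nlinarith [mul_le_mul_of_nonneg_left hb (by positivity : (0:ℝ) ≤ 1 + s * t), sq_nonneg (s * t)]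
  · have h2 : 1 + s * t ≤ (1 + t) ^ s := by
      have := one_add_mul_self_le_rpow_one_add (s := t) (by linarith) hs1.le
      linarith
    have h3 : (1 + t : ℝ) ≤ (1 - t)⁻¹ := by
      rw [inv_eq_one_div, le_div_iff₀ h1t]
      nlinarith
    calc 1 + s * t ≤ (1 + t) ^ s := h2
      _ ≤ ((1 - t)⁻¹) ^ s := Real.rpow_le_rpow (by linarith) h3 hs.le
      _ = (1 - t) ^ (-s) := by rw [Real.inv_rpow h1t.le, ← Real.rpow_neg h1t.le]

lemma claimA {s x : ℝ} (hs : 0 < s) (hx : 1 ≤ x) :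
    s * (x + 1) ^ (-(s+1)) ≤ x ^ (-s) - (x + 1) ^ (-s) := by
  have hx0 : 0 < x := lt_of_lt_of_le zero_lt_one hx
  have hx1 : 0 < x + 1 := by linarith
  set t : ℝ := 1 / (x + 1) with htdef
  have ht0 : 0 < t := by positivity
  have ht : t ≤ 1/2 := by rw [htdef, div_le_div_iff₀ hx1 two_pos]; linarith
  have key := bern_aux hs ht0 ht
  have h1mt : 1 - t = x / (x + 1) := by rw [htdef]; field_simp; ring
  have hxx : (1 - t) ^ (-s) = x ^ (-s) * (x + 1) ^ s := by
    rw [h1mt, Real.div_rpow hx0.le hx1.le, div_eq_mul_inv, ← Real.rpow_neg hx1.le, neg_neg]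
  rw [hxx] at key
  have hp : 0 < (x + 1) ^ (-s) := rpow_pos_of_pos hx1 _
  have hmul := mul_le_mul_of_nonneg_right key hp.le
  have hcancel : x ^ (-s) * (x + 1) ^ s * (x + 1) ^ (-s) = x ^ (-s) := by
    rw [mul_assoc, ← Real.rpow_add hx1]; simp
  rw [hcancel] at hmul
  have hsplit : (x + 1) ^ (-(s+1)) = t * (x + 1) ^ (-s) := by
    rw [htdef, show -(s+1) = -1 + -s by ring, Real.rpow_add hx1, Real.rpow_neg_one, one_div]
  have hexp : (1 + s * t) * (x + 1) ^ (-s) = (x + 1) ^ (-s) + s * t * (x + 1) ^ (-s) := by ring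
  rw [hexp] at hmul
  calc s * (x + 1) ^ (-(s+1)) = s * t * (x + 1) ^ (-s) := by rw [hsplit]; ring
    _ ≤ x ^ (-s) - (x + 1) ^ (-s) := by linarith

lemma tail_bound {s : ℝ} (hs : 0 < s) {c : ℝ} (hc : 1 ≤ c) :
    ∑' k : ℕ, ((k : ℝ) + c + 1) ^ (-(s+1)) ≤ c ^ (-s) / s := by
  have hc0 : (0:ℝ) < c := lt_of_lt_of_le one_pos hc
  apply Real.tsum_le_of_sum_range_le (fun k => rpow_nonneg (by positivity) _)
  intro N
  set g : ℕ → ℝ := fun k => ((k : ℝ) + c) ^ (-s) with hg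
  have key : ∀ k : ℕ, ((k : ℝ) + c + 1) ^ (-(s+1)) ≤ s⁻¹ * (g k - g (k+1)) := by
    intro k
    have hx : (1:ℝ) ≤ (k : ℝ) + c := by
      have : (0:ℝ) ≤ (k:ℝ) := Nat.cast_nonneg k
      linarith
    have h := claimA hs hx
    have h2 := mul_le_mul_of_nonneg_left h (inv_nonneg.2 hs.le)
    rw [← mul_assoc, inv_mul_cancel₀ hs.ne', one_mul] at h2
    have hgk : g (k+1) = ((k:ℝ) + c + 1) ^ (-s) := by
      simp only [hg]; push_cast; ring_nf
    have hgk0 : g k = ((k:ℝ) + c) ^ (-s) := rfl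
    rw [hgk, hgk0]
    exact h2
  calc ∑ k ∈ range N, ((k : ℝ) + c + 1) ^ (-(s+1))
      ≤ ∑ k ∈ range N, s⁻¹ * (g k - g (k+1)) := Finset.sum_le_sum fun k _ => key k
    _ = s⁻¹ * (g 0 - g N) := by rw [← Finset.mul_sum, Finset.sum_range_sub']
    _ ≤ s⁻¹ * g 0 := by
        have : (0:ℝ) ≤ g N := rpow_nonneg (by positivity) _
        have : g 0 - g N ≤ g 0 := by linarith
        exact mul_le_mul_of_nonneg_left this (inv_nonneg.2 hs.le)
    _ = c ^ (-s) / s := by simp [hg, div_eq_inv_mul]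

lemma pow_calc {c ς l : ℝ} (hc : 0 < c) (hl : 0 < l) (hσ : 0 < ς) :
    c ^ 2 * (c ^ (1/(2*ς)) * l ^ (-(1/(4*ς)))) ^ (-(4*ς)) = l := by
  rw [Real.mul_rpow (rpow_nonneg hc.le _) (rpow_nonneg hl.le _),
     ← Real.rpow_mul hc.le, ← Real.rpow_mul hl.le]
  have e1 : 1/(2*ς) * (-(4*ς)) = -2 := by field_simp; ring
  have e2 : (-(1/(4*ς))) * (-(4*ς)) = 1 := by field_simp
  rw [e1, e2, Real.rpow_one]
  rw [show (-2:ℝ) = -((2:ℕ):ℝ) by norm_num, Real.rpow_neg hc.le, Real.rpow_natCast]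
  field_simp

theorem stmt11 (a b ς : ℝ) (ha : 0 ≤ a) (hb : 0 < b) (hς : 1 / 4 < ς)
    (lam : ℕ → ℝ) (hnn : ∀ k, 0 ≤ lam k)
    (hmono : ∀ k l : ℕ, 1 ≤ k → k ≤ l → lam l ≤ lam k)
    (hlow : ∀ k : ℕ, 1 ≤ k → a * (k : ℝ) ^ (-(2 * ς)) ≤ lam k)
    (hup : ∀ k : ℕ, 1 ≤ k → lam k ≤ b * (k : ℝ) ^ (-(2 * ς)))
    (l : ℝ) (hl0 : 0 < l) (hl1 : l < 1) :
    a ^ (1 / (2 * ς)) / 2 * l ^ (-(1 / (4 * ς))) - 1 / 2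
      ≤ ∑' k : ℕ, lam (k + 1) ^ 2 / (lam (k + 1) ^ 2 + l) ∧
    ∑' k : ℕ, lam (k + 1) ^ 2 / (lam (k + 1) ^ 2 + l)
      ≤ b ^ (1 / (2 * ς)) * (1 + 1 / (4 * ς - 1)) * l ^ (-(1 / (4 * ς))) + 1 := by
  have hσ0 : 0 < ς := by linarith
  set s : ℝ := 4 * ς - 1 with hsdef
  have hs : 0 < s := by rw [hsdef]; linarith
  have hs1 : s + 1 = 4 * ς := by rw [hsdef]; ring
  clear_value s
  set f : ℕ → ℝ := fun k => lam (k + 1) ^ 2 / (lam (k + 1) ^ 2 + l) with hfdef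
  have hden : ∀ k : ℕ, 0 < lam (k + 1) ^ 2 + l := fun k => by positivity
  have hf0 : ∀ k, 0 ≤ f k := fun k => div_nonneg (sq_nonneg _) (hden k).le
  have hf1 : ∀ k, f k ≤ 1 := fun k => div_le_one_of_le₀ (by linarith) (hden k).le
  have hcast1 : ∀ k : ℕ, (1:ℝ) ≤ ((k + 1 : ℕ) : ℝ) := fun k => by
    exact_mod_cast Nat.le_add_left 1 k
  have hcpos : ∀ k : ℕ, (0:ℝ) < ((k + 1 : ℕ) : ℝ) := fun k =>
    lt_of_lt_of_le one_pos (hcast1 k)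
  have hpowsq : ∀ k : ℕ, (((k + 1 : ℕ) : ℝ) ^ (-(2 * ς))) ^ 2
      = ((k + 1 : ℕ) : ℝ) ^ (-(4 * ς)) := by
    intro k
    rw [← Real.rpow_natCast (((k + 1 : ℕ) : ℝ) ^ (-(2 * ς))) 2,
      ← Real.rpow_mul (hcpos k).le]
    norm_num
    ring_nf
  have hub2 : ∀ k : ℕ, lam (k + 1) ^ 2 ≤ b ^ 2 * ((k + 1 : ℕ) : ℝ) ^ (-(4 * ς)) := by
    intro k
    have h := hup (k + 1) (Nat.le_add_left 1 k)
    have h2 : lam (k + 1) ^ 2 ≤ (b * ((k + 1 : ℕ) : ℝ) ^ (-(2 * ς))) ^ 2 :=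
      pow_le_pow_left₀ (hnn _) h 2
    calc lam (k + 1) ^ 2 ≤ (b * ((k + 1 : ℕ) : ℝ) ^ (-(2 * ς))) ^ 2 := h2
      _ = b ^ 2 * (((k + 1 : ℕ) : ℝ) ^ (-(2 * ς))) ^ 2 := by ring
      _ = b ^ 2 * ((k + 1 : ℕ) : ℝ) ^ (-(4 * ς)) := by rw [hpowsq]
  have hsum_rpow : Summable (fun k : ℕ => ((k + 1 : ℕ) : ℝ) ^ (-(4 * ς))) := by
    have h0 : Summable (fun n : ℕ => (n : ℝ) ^ (-(4 * ς))) :=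
      Real.summable_nat_rpow.2 (by linarith)
    exact (summable_nat_add_iff 1).2 h0
  have hfb : ∀ k : ℕ, f k ≤ b ^ 2 / l * ((k + 1 : ℕ) : ℝ) ^ (-(4 * ς)) := by
    intro k
    calc f k ≤ lam (k + 1) ^ 2 / l := by
          show lam (k + 1) ^ 2 / (lam (k + 1) ^ 2 + l) ≤ lam (k + 1) ^ 2 / l
          gcongr
          linarith [sq_nonneg (lam (k + 1))]
      _ ≤ b ^ 2 * ((k + 1 : ℕ) : ℝ) ^ (-(4 * ς)) / l := by
          gcongr
          exact hub2 k
      _ = b ^ 2 / l * ((k + 1 : ℕ) : ℝ) ^ (-(4 * ς)) := by ring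
  have hsumf : Summable f :=
    Summable.of_nonneg_of_le hf0 hfb (hsum_rpow.mul_left (b ^ 2 / l))
  constructor
  · -- lower bound
    set M : ℝ := a ^ (1 / (2 * ς)) * l ^ (-(1 / (4 * ς))) with hMdef
    set m' : ℕ := ⌊M⌋₊ with hm'def
    have hM0 : 0 ≤ M := by positivity
    have hm'M : (m' : ℝ) ≤ M := Nat.floor_le hM0
    have hfloor : M - 1 < (m' : ℝ) := Nat.sub_one_lt_floor M
    clear_value m'
    clear_value M
    have half : ∀ k : ℕ, k < m' → 1 / 2 ≤ f k := by
      intro k hk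
      have hkM : ((k + 1 : ℕ) : ℝ) ≤ M := by
        calc ((k + 1 : ℕ) : ℝ) ≤ (m' : ℝ) := by exact_mod_cast hk
          _ ≤ M := hm'M
      have hM1 : (1:ℝ) ≤ M := le_trans (hcast1 k) hkM
      have ha0 : 0 < a := by
        rcases ha.eq_or_lt with h | h
        · exfalso
          rw [hMdef, ← h, Real.zero_rpow (ne_of_gt (by positivity : (0:ℝ) < 1 / (2 * ς))),
            zero_mul] at hM1
          linarith
        · exact h
      have hMl : a ^ 2 * M ^ (-(4 * ς)) = l := by
        rw [hMdef]; exact pow_calc ha0 hl0 hσ0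
      have hlb2 : a ^ 2 * ((k + 1 : ℕ) : ℝ) ^ (-(4 * ς)) ≤ lam (k + 1) ^ 2 := by
        have h := hlow (k + 1) (Nat.le_add_left 1 k)
        have h2 : (a * ((k + 1 : ℕ) : ℝ) ^ (-(2 * ς))) ^ 2 ≤ lam (k + 1) ^ 2 :=
          pow_le_pow_left₀ (by positivity) h 2
        calc a ^ 2 * ((k + 1 : ℕ) : ℝ) ^ (-(4 * ς))
            = (a * ((k + 1 : ℕ) : ℝ) ^ (-(2 * ς))) ^ 2 := by
              rw [mul_pow, hpowsq]
          _ ≤ lam (k + 1) ^ 2 := h2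
      have hlaml : l ≤ lam (k + 1) ^ 2 := by
        have h3 : M ^ (-(4 * ς)) ≤ ((k + 1 : ℕ) : ℝ) ^ (-(4 * ς)) :=
          Real.rpow_le_rpow_of_nonpos (hcpos k) hkM (by linarith)
        calc l = a ^ 2 * M ^ (-(4 * ς)) := hMl.symm
          _ ≤ a ^ 2 * ((k + 1 : ℕ) : ℝ) ^ (-(4 * ς)) := by
              exact mul_le_mul_of_nonneg_left h3 (sq_nonneg a)
          _ ≤ lam (k + 1) ^ 2 := hlb2
      show (1:ℝ) / 2 ≤ lam (k + 1) ^ 2 / (lam (k + 1) ^ 2 + l)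
      rw [div_le_div_iff₀ two_pos (hden k)]
      linarith
    have hsumlow : (m' : ℝ) * (1 / 2) ≤ ∑ k ∈ Finset.range m', f k := by
      calc (m' : ℝ) * (1 / 2) = ∑ _k ∈ Finset.range m', (1 / 2 : ℝ) := by
            simp [mul_comm]
        _ ≤ ∑ k ∈ Finset.range m', f k :=
            Finset.sum_le_sum fun k hk => half k (Finset.mem_range.1 hk)
    have hst := hsumf.sum_le_tsum (Finset.range m') (fun k _ => hf0 k)
    have hgoal : a ^ (1 / (2 * ς)) / 2 * l ^ (-(1 / (4 * ς))) - 1 / 2 = M / 2 - 1 / 2 := by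
      rw [hMdef]; ring
    rw [hgoal]
    linarith
  · -- upper bound
    set K : ℝ := b ^ (1 / (2 * ς)) * l ^ (-(1 / (4 * ς))) with hKdef
    have hK0 : 0 < K := by positivity
    have hKl : b ^ 2 * K ^ (-(s + 1)) = l := by
      rw [hKdef, hs1]; exact pow_calc hb hl0 hσ0
    set m : ℕ := ⌊K⌋₊ with hmdef
    have hmK : (m : ℝ) ≤ K := Nat.floor_le hK0.le
    have hKm : K < (m : ℝ) + 1 := Nat.lt_floor_add_one K
    clear_value m
    clear_value K
    have hsplit := (Summable.sum_add_tsum_nat_add (m + 1) hsumf).symm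
    have hpart1 : ∑ k ∈ Finset.range (m + 1), f k ≤ (m : ℝ) + 1 := by
      calc ∑ k ∈ Finset.range (m + 1), f k ≤ ∑ _k ∈ Finset.range (m + 1), (1:ℝ) :=
            Finset.sum_le_sum fun k _ => hf1 k
        _ = (m : ℝ) + 1 := by simp
    have hc1 : (1:ℝ) ≤ (m : ℝ) + 1 := by
      have : (0:ℝ) ≤ (m : ℝ) := Nat.cast_nonneg m
      linarith
    have hfuneq : (fun k : ℕ => b ^ 2 / l * ((k + (m + 1) + 1 : ℕ) : ℝ) ^ (-(4 * ς)))
        = fun k : ℕ => b ^ 2 / l * ((k : ℝ) + ((m : ℝ) + 1) + 1) ^ (-(s + 1)) := by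
      funext k
      rw [hs1]
      push_cast
      ring_nf
    have hsumtail : Summable (fun k : ℕ => b ^ 2 / l
        * ((k : ℝ) + ((m : ℝ) + 1) + 1) ^ (-(s + 1))) := by
      rw [← hfuneq]
      have h0 : Summable (fun n : ℕ => (n : ℝ) ^ (-(4 * ς))) :=
        Real.summable_nat_rpow.2 (by linarith)
      exact ((summable_nat_add_iff (m + 2)).2 h0).mul_left _
    have hbtail : ∀ k : ℕ, f (k + (m + 1))
        ≤ b ^ 2 / l * ((k : ℝ) + ((m : ℝ) + 1) + 1) ^ (-(s + 1)) := by
      intro k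
      have := hfb (k + (m + 1))
      have heq : (((k + (m + 1)) + 1 : ℕ) : ℝ) ^ (-(4 * ς))
          = ((k : ℝ) + ((m : ℝ) + 1) + 1) ^ (-(s + 1)) := by
        rw [hs1]; push_cast; ring_nf
      rw [heq] at this
      exact this
    have htail : ∑' k : ℕ, f (k + (m + 1)) ≤ K / s := by
      have hT := tail_bound hs hc1
      calc ∑' k : ℕ, f (k + (m + 1))
          ≤ ∑' k : ℕ, b ^ 2 / l * ((k : ℝ) + ((m : ℝ) + 1) + 1) ^ (-(s + 1)) :=
            ((summable_nat_add_iff (m + 1)).2 hsumf).tsum_le_tsum hbtail hsumtail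
        _ = b ^ 2 / l * ∑' k : ℕ, ((k : ℝ) + ((m : ℝ) + 1) + 1) ^ (-(s + 1)) :=
            tsum_mul_left
        _ ≤ b ^ 2 / l * (((m : ℝ) + 1) ^ (-s) / s) := by
            apply mul_le_mul_of_nonneg_left hT (by positivity)
        _ ≤ b ^ 2 / l * (K ^ (-s) / s) := by
            have h4 : ((m : ℝ) + 1) ^ (-s) ≤ K ^ (-s) :=
              Real.rpow_le_rpow_of_nonpos hK0 hKm.le (by linarith)
            apply mul_le_mul_of_nonneg_left _ (by positivity)
            exact div_le_div_of_nonneg_right h4 hs.le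
        _ = K / s := by
            have hKs : K ^ (-s) = K * K ^ (-(s + 1)) := by
              rw [show -s = 1 + -(s + 1) by ring, Real.rpow_add hK0, Real.rpow_one]
            have hexp : b ^ 2 / l * (K * K ^ (-(s + 1)) / s)
                = K * (b ^ 2 * K ^ (-(s + 1))) / (l * s) := by ring
            rw [hKs, hexp, hKl]
            field_simp
    have hgoal2 : b ^ (1 / (2 * ς)) * (1 + 1 / s) * l ^ (-(1 / (4 * ς))) + 1
        = K * (1 + 1 / s) + 1 := by rw [hKdef]; ring
    have hKr : K * (1 + 1 / s) = K + K / s := by ring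
    rw [hgoal2, hKr]
    linarith [hsplit, hpart1, htail, hmK]
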